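/- Let n ≥ 4 be an integer with n ≡ 0 (mod 4), and let f₀ be the quadratic form on ℚⁿ given by f₀(x) = -x₀² + x₁² + ⋯ + x_{n-1}². Then for every prime number p with p ≡ 1 (mod 4), the scaled form p·f₀ is equivalent to f₀ over ℚ. -/

import Mathlib

/-- Pair up coordinates: `2k ↔ 2k+1`. -/
def MilaPtn (n : ℕ) (h2 : n % 2 = 0) (i : Fin n) : Fin n :=
  ⟨if i.val % 2 = 0 then i.val + 1 else i.val - 1, by
    have := i.isLt; split_ifs with h <;> omega⟩

lemma MilaPtn_ptn (n : ℕ) (h2 : n % 2 = 0) (i : Fin n) :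
    MilaPtn n h2 (MilaPtn n h2 i) = i := by
  apply Fin.ext
  simp only [MilaPtn]
  have := i.isLt
  split_ifs <;> omega

/-- Forward map of the equivalence. -/
def MilaF (n : ℕ) (h2 : n % 2 = 0) (p a b : ℚ) (x : Fin n → ℚ) (i : Fin n) : ℚ :=
  if i.val = 0 then ((x (MilaPtn n h2 i) + x i) - (x (MilaPtn n h2 i) - x i) / p) / 2
  else if i.val = 1 then ((x i + x (MilaPtn n h2 i)) + (x i - x (MilaPtn n h2 i)) / p) / 2
  else if i.val % 2 = 0 then (a * x i + b * x (MilaPtn n h2 i)) / p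
  else (-b * x (MilaPtn n h2 i) + a * x i) / p

/-- Inverse map of the equivalence. -/
def MilaG (n : ℕ) (h2 : n % 2 = 0) (p a b : ℚ) (y : Fin n → ℚ) (i : Fin n) : ℚ :=
  if i.val = 0 then ((y i + y (MilaPtn n h2 i)) - p * (y (MilaPtn n h2 i) - y i)) / 2
  else if i.val = 1 then ((y (MilaPtn n h2 i) + y i) + p * (y i - y (MilaPtn n h2 i))) / 2
  else if i.val % 2 = 0 then a * y i - b * y (MilaPtn n h2 i)
  else b * y (MilaPtn n h2 i) + a * y i

theorem scaled_form_equivalent_of_zero_mod_four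
    (n : ℕ) (hn : 4 ≤ n) (hmod : n % 4 = 0)
    (f₀ : (Fin n → ℚ) → ℚ)
    (hf₀ : ∀ x, f₀ x = ∑ i : Fin n, (if i.val = 0 then (-1 : ℚ) else 1) * x i ^ 2)
    (p : ℕ) (hp : p.Prime) (hp1 : p % 4 = 1) :
    ∃ T : (Fin n → ℚ) ≃ₗ[ℚ] (Fin n → ℚ), ∀ x, (p : ℚ) * f₀ (T x) = f₀ x := by
  have h2 : n % 2 = 0 := by omega
  haveI : Fact p.Prime := ⟨hp⟩
  obtain ⟨A, B, hAB⟩ := Nat.Prime.sq_add_sq (p := p) (by omega)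
  set a : ℚ := (A : ℚ)
  set b : ℚ := (B : ℚ)
  have hab : a ^ 2 + b ^ 2 = (p : ℚ) := by rw [← hAB]; push_cast; ring
  have hp0 : (p : ℚ) ≠ 0 := Nat.cast_ne_zero.mpr hp.ne_zero
  -- basic facts about the pairing
  have hval : ∀ i : Fin n, (MilaPtn n h2 i).val
      = if i.val % 2 = 0 then i.val + 1 else i.val - 1 := fun i => rfl
  have key : ∀ (x : Fin n → ℚ) (i : Fin n),
      MilaG n h2 (p : ℚ) a b (MilaF n h2 (p : ℚ) a b x) i = x i := by
    intro x i
    have hiv := i.isLt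
    have hjv := hval i
    by_cases h0 : i.val = 0
    · have hj1 : (MilaPtn n h2 i).val = 1 := by rw [hval i]; split_ifs <;> omega
      simp only [MilaG, MilaF, MilaPtn_ptn]
      rw [if_pos h0, if_pos h0, if_neg (by omega), if_pos hj1]
      field_simp
      ring
    · by_cases h1 : i.val = 1
      · have hj0 : (MilaPtn n h2 i).val = 0 := by rw [hval i]; split_ifs <;> omega
        simp only [MilaG, MilaF, MilaPtn_ptn]
        rw [if_neg h0, if_pos h1, if_neg h0, if_pos h1, if_pos hj0]
        field_simp
        ring
      · by_cases he : i.val % 2 = 0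
        · have hj : (MilaPtn n h2 i).val = i.val + 1 := by rw [hval i]; split_ifs <;> omega
          simp only [MilaG, MilaF, MilaPtn_ptn]
          rw [if_neg h0, if_neg h1, if_pos he, if_neg h0, if_neg h1, if_pos he,
            if_neg (by omega), if_neg (by omega), if_neg (by omega)]
          field_simp
          linear_combination x i * hab
        · have hj : (MilaPtn n h2 i).val = i.val - 1 := by rw [hval i]; split_ifs <;> omega
          simp only [MilaG, MilaF, MilaPtn_ptn]
          rw [if_neg h0, if_neg h1, if_neg he, if_neg h0, if_neg h1, if_neg he,
            if_neg (by omega), if_neg (by omega), if_pos (by omega)]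
          field_simp
          linear_combination x i * hab
  have key' : ∀ (y : Fin n → ℚ) (i : Fin n),
      MilaF n h2 (p : ℚ) a b (MilaG n h2 (p : ℚ) a b y) i = y i := by
    intro y i
    have hiv := i.isLt
    have hjv := hval i
    by_cases h0 : i.val = 0
    · have hj1 : (MilaPtn n h2 i).val = 1 := by rw [hval i]; split_ifs <;> omega
      simp only [MilaG, MilaF, MilaPtn_ptn]
      rw [if_pos h0, if_pos h0, if_neg (by omega), if_pos hj1]
      field_simp
      ring
    · by_cases h1 : i.val = 1
      · have hj0 : (MilaPtn n h2 i).val = 0 := by rw [hval i]; split_ifs <;> omega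
        simp only [MilaG, MilaF, MilaPtn_ptn]
        rw [if_neg h0, if_pos h1, if_neg h0, if_pos h1, if_pos hj0]
        field_simp
        ring
      · by_cases he : i.val % 2 = 0
        · have hj : (MilaPtn n h2 i).val = i.val + 1 := by rw [hval i]; split_ifs <;> omega
          simp only [MilaG, MilaF, MilaPtn_ptn]
          rw [if_neg h0, if_neg h1, if_pos he, if_neg h0, if_neg h1, if_pos he,
            if_neg (by omega), if_neg (by omega), if_neg (by omega)]
          field_simp
          linear_combination y i * hab
        · have hj : (MilaPtn n h2 i).val = i.val - 1 := by rw [hval i]; split_ifs <;> omega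
          simp only [MilaG, MilaF, MilaPtn_ptn]
          rw [if_neg h0, if_neg h1, if_neg he, if_neg h0, if_neg h1, if_neg he,
            if_neg (by omega), if_neg (by omega), if_pos (by omega)]
          field_simp
          linear_combination y i * hab
  refine ⟨{ toFun := MilaF n h2 (p : ℚ) a b
            map_add' := ?_
            map_smul' := ?_
            invFun := MilaG n h2 (p : ℚ) a b
            left_inv := fun x => funext fun i => key x i
            right_inv := fun y => funext fun i => key' y i }, ?_⟩
  · intro x y
    funext i
    simp only [MilaF, Pi.add_apply]
    split_ifs <;> ring
  · intro c x
    funext i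
    simp only [MilaF, Pi.smul_apply, smul_eq_mul, RingHom.id_apply]
    split_ifs <;> ring
  · intro x
    simp only [LinearEquiv.coe_mk, LinearMap.coe_mk, AddHom.coe_mk]
    rw [hf₀, hf₀]
    have hz : ∑ i : Fin n,
        ((if i.val = 0 then (-1 : ℚ) else 1) * x i ^ 2
          - (p : ℚ) * ((if i.val = 0 then (-1 : ℚ) else 1)
            * (MilaF n h2 (p : ℚ) a b x i) ^ 2)) = 0 := by
      apply Finset.sum_ninvolution (g := MilaPtn n h2)
      · intro i
        have hiv := i.isLt
        have hab0 : a ^ 2 + b ^ 2 ≠ 0 := by rw [hab]; exact hp0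
        simp only [MilaF, MilaPtn_ptn, hval i]
        split_ifs
        all_goals try (exfalso; first | assumption | omega)
        all_goals try (field_simp; ring)
        all_goals
          linear_combination (-(x i ^ 2 + x (MilaPtn n h2 i) ^ 2)) * hab
      · intro i _
        intro hcontra
        apply absurd (congrArg Fin.val hcontra)
        have hjv := hval i
        have hiv := i.isLt
        split_ifs at hjv <;> omega
      · intro i; exact Finset.mem_univ _
      · intro i; exact MilaPtn_ptn n h2 i
    rw [Finset.sum_sub_distrib, sub_eq_zero] at hz
    rw [hz, ← Finset.mul_sum]
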